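/- The number of n×n Hankel matrices over F_q of rank at most r equals q^(2r), for any 0 ≤ r < n. -/

import Mathlib

namespace HankelAux

variable {F : Type*} [Field F]

/-- `a` satisfies on `[d, m)` the linear recurrence of order `d` with coefficients `c`. -/
def Gens (c : ℕ → F) (d m : ℕ) (a : ℕ → F) : Prop :=
  ∀ t, d ≤ t → t < m → a t = ∑ k ∈ Finset.range d, c k * a (t - 1 - k)

lemma gens_trivial (a : ℕ → F) (m : ℕ) : Gens (fun _ => 0) m m a := by
  intro t h1 h2; omega

lemma gens_mono_m {c : ℕ → F} {d m m' : ℕ} (h : m' ≤ m) (hg : Gens c d m a) :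
    Gens c d m' a := fun t h1 h2 => hg t h1 (lt_of_lt_of_le h2 h)

/-- linear complexity of the prefix of length `m` of `a` -/
noncomputable def lc (a : ℕ → F) (m : ℕ) : ℕ := sInf {d | ∃ c : ℕ → F, Gens c d m a}

lemma lc_exists (a : ℕ → F) (m : ℕ) : ∃ c : ℕ → F, Gens c (lc a m) m a :=
  Nat.sInf_mem (s := {d | ∃ c : ℕ → F, Gens c d m a}) ⟨m, fun _ => 0, gens_trivial a m⟩

lemma lc_le {a : ℕ → F} {d m : ℕ} (h : ∃ c : ℕ → F, Gens c d m a) : lc a m ≤ d :=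
  Nat.sInf_le h

lemma lc_le_len (a : ℕ → F) (m : ℕ) : lc a m ≤ m := lc_le ⟨fun _ => 0, gens_trivial a m⟩

lemma lc_mono (a : ℕ → F) {m m' : ℕ} (h : m' ≤ m) : lc a m' ≤ lc a m := by
  obtain ⟨c, hc⟩ := lc_exists a m
  exact lc_le ⟨c, gens_mono_m h hc⟩

lemma lc_zero (a : ℕ → F) : lc a 0 = 0 := Nat.le_zero.mp (lc_le_len a 0)

lemma gens_congr {c : ℕ → F} {d m : ℕ} {a a' : ℕ → F} (h : ∀ t < m, a t = a' t)
    (hg : Gens c d m a) : Gens c d m a' := by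
  intro t h1 h2
  rw [← h t h2, hg t h1 h2]
  exact Finset.sum_congr rfl fun k hk => by rw [h (t - 1 - k) (by omega)]

lemma lc_congr {m : ℕ} {a a' : ℕ → F} (h : ∀ t < m, a t = a' t) : lc a m = lc a' m := by
  apply le_antisymm
  · obtain ⟨c, hc⟩ := lc_exists a' m
    exact lc_le ⟨c, gens_congr (fun t ht => (h t ht).symm) hc⟩
  · obtain ⟨c, hc⟩ := lc_exists a m
    exact lc_le ⟨c, gens_congr h hc⟩

/-- Massey's lemma. -/
lemma massey {a c c' : ℕ → F} {l l' k : ℕ}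
    (hc : Gens c l k a) (hfail : a k ≠ ∑ i ∈ Finset.range l, c i * a (k - 1 - i))
    (hc' : Gens c' l' (k + 1) a) : k + 1 ≤ l + l' := by
  by_contra h
  push_neg at h
  have hl : l ≤ k := by omega
  have hl' : l' ≤ k := by omega
  apply hfail
  have e1 : a k = ∑ i ∈ Finset.range l', c' i * a (k - 1 - i) := hc' k (by omega) (by omega)
  have e2 : ∀ i ∈ Finset.range l', c' i * a (k - 1 - i)
      = ∑ j ∈ Finset.range l, c' i * (c j * a (k - 2 - i - j)) := by
    intro i hi
    simp only [Finset.mem_range] at hi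
    rw [hc (k - 1 - i) (by omega) (by omega), Finset.mul_sum]
    exact Finset.sum_congr rfl fun j hj => by
      simp only [Finset.mem_range] at hj
      rw [show k - 1 - i - 1 - j = k - 2 - i - j by omega]
  rw [e1, Finset.sum_congr rfl e2, Finset.sum_comm]
  apply Finset.sum_congr rfl
  intro j hj
  simp only [Finset.mem_range] at hj
  have e3 : a (k - 1 - j) = ∑ i ∈ Finset.range l', c' i * a (k - 2 - i - j) := by
    rw [hc' (k - 1 - j) (by omega) (by omega)]
    exact Finset.sum_congr rfl fun i hi => by
      simp only [Finset.mem_range] at hi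
      rw [show k - 1 - j - 1 - i = k - 2 - i - j by omega]
  rw [e3, Finset.mul_sum]
  exact Finset.sum_congr rfl fun i hi => by ring


lemma gens_pad {a c : ℕ → F} {d d' m : ℕ} (h : d ≤ d') (hg : Gens c d m a) :
    Gens (fun k => if k < d then c k else 0) d' m a := by
  intro t h1 h2
  rw [hg t (by omega) h2]
  rw [← Finset.sum_subset (Finset.range_subset_range.mpr h)
      (fun x _ hx => by
        simp only [Finset.mem_range, not_lt] at hx
        simp only [if_neg (by omega : ¬ x < d), zero_mul])]
  exact Finset.sum_congr rfl fun k hk => by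
    simp only [Finset.mem_range] at hk
    simp [hk]

lemma lc_pad {a : ℕ → F} {d m : ℕ} (h : lc a m ≤ d) : ∃ c, Gens c d m a := by
  obtain ⟨c, hc⟩ := lc_exists a m
  exact ⟨_, gens_pad h hc⟩

/-- Uniqueness: two sequences with recurrences of orders `l, l'`, agreeing on `[0,s)`
with `l + l' ≤ s ≤ m`, agree on `[0,m)`. -/
lemma gens_unique {a a' c c' : ℕ → F} {l l' s m : ℕ}
    (hc : Gens c l m a) (hc' : Gens c' l' m a')
    (hag : ∀ t < s, a t = a' t) (hll : l + l' ≤ s) (hsm : s ≤ m) :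
    ∀ t < m, a t = a' t := by
  by_contra hcon
  push_neg at hcon
  have hex : ∃ t, t < m ∧ a t ≠ a' t := by
    obtain ⟨t0, ht0, hne⟩ := hcon; exact ⟨t0, ht0, hne⟩
  classical
  set N := Nat.find hex with hN
  obtain ⟨hNm, hNne⟩ : N < m ∧ a N ≠ a' N := Nat.find_spec hex
  have hmin : ∀ u < N, u < m → a u = a' u := by
    intro u hu hum
    have := Nat.find_min hex hu
    push_neg at this
    exact this hum
  have hNs : s ≤ N := by
    by_contra hns
    exact hNne (hag N (by omega))
  have hca : Gens c' l' N a := by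
    intro u h1 h2
    rw [hmin u h2 (by omega), hc' u h1 (by omega)]
    refine Finset.sum_congr rfl fun i hi => ?_
    simp only [Finset.mem_range] at hi
    rw [hmin (u - 1 - i) (by omega) (by omega)]
  have hfail : a N ≠ ∑ i ∈ Finset.range l', c' i * a (N - 1 - i) := by
    have : ∑ i ∈ Finset.range l', c' i * a (N - 1 - i)
        = ∑ i ∈ Finset.range l', c' i * a' (N - 1 - i) :=
      Finset.sum_congr rfl fun i hi => by
        simp only [Finset.mem_range] at hi
        rw [hmin (N - 1 - i) (by omega) (by omega)]
    rw [this, ← hc' N (by omega) hNm]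
    exact hNne
  have := massey hca hfail (gens_mono_m (by omega) hc)
  omega

/-- Either the complexity stays, or Massey's jump bound. -/
lemma lc_succ_eq_or (a : ℕ → F) (t : ℕ) :
    lc a (t+1) = lc a t ∨ t + 1 ≤ lc a t + lc a (t+1) := by
  obtain ⟨c, hc⟩ := lc_exists a t
  by_cases hst : a t = ∑ k ∈ Finset.range (lc a t), c k * a (t - 1 - k)
  · left
    refine le_antisymm (lc_le ⟨c, fun u h1 h2 => ?_⟩) (lc_mono a (Nat.le_succ t))
    rcases (by omega : u < t ∨ u = t) with h | rfl
    · exact hc u h1 h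
    · exact hst
  · right
    obtain ⟨c', hc'⟩ := lc_exists a (t+1)
    exact massey hc hst hc'

/-- Berlekamp–Massey upper bound on complexity jumps. -/
theorem lc_succ_le (a : ℕ → F) : ∀ k, lc a (k+1) ≤ max (lc a k) (k + 1 - lc a k) := by
  intro k
  induction k using Nat.strong_induction_on with
  | _ k IH =>
  obtain ⟨c, hc⟩ := lc_exists a k
  set l := lc a k with hl
  by_cases hst : a k = ∑ i ∈ Finset.range l, c i * a (k - 1 - i)
  · refine le_trans (lc_le ⟨c, fun u h1 h2 => ?_⟩) (le_max_left _ _)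
    rcases (by omega : u < k ∨ u = k) with h | rfl
    · exact hc u h1 h
    · exact hst
  · by_cases hl0 : l = 0
    · refine le_trans (lc_le_len a (k+1)) ?_
      rw [hl0]
      simp
    · have h0 : lc a 0 < l := by rw [lc_zero]; omega
      classical
      set j := Nat.findGreatest (fun t => lc a t < l) k with hj
      have hjlt : lc a j < l := Nat.findGreatest_spec (P := fun t => lc a t < l) (Nat.zero_le k) h0
      have hjle : j ≤ k := Nat.findGreatest_le k
      have hjk : j < k := by
        rcases Nat.lt_or_ge j k with h | h
        · exact h
        · exfalso
          have hjk' : j = k := by omega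
          rw [hjk'] at hjlt
          omega
      have hj1 : lc a (j+1) = l := by
        have h1 : ¬ lc a (j+1) < l := by
          refine Nat.findGreatest_is_greatest (P := fun t => lc a t < l) (k := j + 1)
            (n := k) ?_ (by omega)
          rw [← hj]
          omega
        have h2 : lc a (j+1) ≤ l := hl ▸ lc_mono a (by omega)
        omega
      set l' := lc a j with hl'
      obtain ⟨c', hc'⟩ := lc_exists a j
      have hfail' : a j ≠ ∑ i ∈ Finset.range l', c' i * a (j - 1 - i) := by
        intro heq
        have : lc a (j+1) ≤ l' := lc_le ⟨c', fun u h1 h2 => by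
          rcases (by omega : u < j ∨ u = j) with h | rfl
          · exact hc' u h1 h
          · exact heq⟩
        omega
      obtain ⟨c1, hc1⟩ := lc_exists a (j+1)
      have hM : j + 1 ≤ l' + l := by
        have := massey hc' hfail' hc1
        rw [hj1] at this
        exact this
      have hIH : l ≤ max l' (j + 1 - l') := hj1 ▸ IH j hjk
      have hle : l' + l = j + 1 := by
        have h2 : l ≤ j + 1 - l' := by
          rcases max_cases l' (j + 1 - l') with ⟨hm, _⟩ | ⟨hm, _⟩ <;> omega
        omega
      have hlk : l ≤ k := hl ▸ lc_le_len a k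
      set D := max l (k + 1 - l) with hD
      set del : F := a k - ∑ i ∈ Finset.range l, c i * a (k - 1 - i) with hdel
      set del' : F := a j - ∑ i ∈ Finset.range l', c' i * a (j - 1 - i) with hdel'
      have hdel'0 : del' ≠ 0 := sub_ne_zero.mpr hfail'
      have hDval : k + 1 - l = k - j + l' := by omega
      set c2 : ℕ → F := fun i => (if i < l then c i else 0)
        + (if i = k - j - 1 then del / del' else 0)
        - (if k - j ≤ i ∧ i < k - j + l' then del / del' * c' (i - (k - j)) else 0) with hc2
      suffices hgen : Gens c2 D (k+1) a by
        exact lc_le ⟨c2, hgen⟩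
      intro t h1 h2
      have htD : D ≤ t := h1
      have htl : l ≤ t := le_trans (le_max_left _ _) h1
      have htkj : k - j + l' ≤ t := le_trans (hDval ▸ le_max_right _ _) h1
      have expand : ∑ i ∈ Finset.range D, c2 i * a (t - 1 - i)
          = (∑ i ∈ Finset.range l, c i * a (t - 1 - i))
            + del / del' * (a (t - (k - j))
              - ∑ i ∈ Finset.range l', c' i * a (t - (k - j) - 1 - i)) := by
        have e0 : ∀ i, c2 i * a (t - 1 - i)
            = (if i < l then c i else 0) * a (t - 1 - i)
              + (if i = k - j - 1 then del / del' else 0) * a (t - 1 - i)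
              - (if k - j ≤ i ∧ i < k - j + l' then del / del' * c' (i - (k - j)) else 0)
                  * a (t - 1 - i) := by
          intro i
          rw [hc2]
          ring
        rw [Finset.sum_congr rfl fun i _ => e0 i, Finset.sum_sub_distrib,
          Finset.sum_add_distrib]
        have eA : ∑ i ∈ Finset.range D, (if i < l then c i else 0) * a (t - 1 - i)
            = ∑ i ∈ Finset.range l, c i * a (t - 1 - i) := by
          rw [← Finset.sum_subset (Finset.range_subset_range.mpr (le_max_left l (k+1-l)))
            (fun x _ hx => by
              simp only [Finset.mem_range, not_lt] at hx
              simp only [if_neg (by omega : ¬ x < l), zero_mul])]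
          exact Finset.sum_congr rfl fun i hi => by
            simp only [Finset.mem_range] at hi
            simp [hi]
        have eB : ∑ i ∈ Finset.range D, (if i = k - j - 1 then del / del' else 0) * a (t - 1 - i)
            = del / del' * a (t - (k - j)) := by
          have step : ∀ i ∈ Finset.range D,
              (if i = k - j - 1 then del / del' else 0) * a (t - 1 - i)
              = if i = k - j - 1 then del / del' * a (t - 1 - i) else 0 := by
            intro i _
            rw [ite_mul, zero_mul]
          rw [Finset.sum_congr rfl step]
          rw [Finset.sum_ite_eq' (Finset.range D) (k - j - 1)
            (fun i => del / del' * a (t - 1 - i))]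
          rw [if_pos (Finset.mem_range.mpr (by omega))]
          rw [show t - 1 - (k - j - 1) = t - (k - j) by omega]
        have eC : ∑ i ∈ Finset.range D,
              (if k - j ≤ i ∧ i < k - j + l' then del / del' * c' (i - (k - j)) else 0)
                * a (t - 1 - i)
            = ∑ i ∈ Finset.range l', del / del' * (c' i * a (t - (k - j) - 1 - i)) := by
          rw [← Finset.sum_subset
            (show Finset.Ico (k - j) (k - j + l') ⊆ Finset.range D by
              intro x hx
              simp only [Finset.mem_Ico] at hx
              simp only [Finset.mem_range]
              omega)
            (fun x _ hx => by
              simp only [Finset.mem_Ico, not_and, not_lt] at hx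
              rcases Nat.lt_or_ge x (k - j) with h | h
              · simp only [if_neg (by omega : ¬ (k - j ≤ x ∧ x < k - j + l')), zero_mul]
              · simp only [if_neg (by have := hx h; omega : ¬ (k - j ≤ x ∧ x < k - j + l')),
                  zero_mul])]
          rw [Finset.sum_Ico_eq_sum_range]
          rw [show k - j + l' - (k - j) = l' by omega]
          refine Finset.sum_congr rfl fun i hi => ?_
          simp only [Finset.mem_range] at hi
          rw [if_pos ⟨by omega, by omega⟩]
          rw [show k - j + i - (k - j) = i by omega,
            show t - 1 - (k - j + i) = t - (k - j) - 1 - i by omega]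
          ring
        rw [eA, eB, eC, ← Finset.mul_sum, mul_sub]
        ring
      rw [expand]
      rcases (by omega : t < k ∨ t = k) with htk | htk2
      · rw [← hc t htl htk]
        have hu1 : l' ≤ t - (k - j) := by omega
        have hu2 : t - (k - j) < j := by omega
        rw [← hc' (t - (k - j)) hu1 hu2]
        simp
      · subst htk2
        have hbr : a (t - (t - j)) - ∑ i ∈ Finset.range l', c' i * a (t - (t - j) - 1 - i)
            = del' := by
          rw [show t - (t - j) = j by omega]
        rw [hbr, div_mul_cancel₀ _ hdel'0]
        rw [hdel]
        ring

lemma lc_update_eq (b : ℕ → F) (m : ℕ) (x : F) :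
    lc (Function.update b m x) m = lc b m :=
  lc_congr (fun t ht => Function.update_of_ne (by omega) x b)

lemma lc_ext_ge (b : ℕ → F) (m : ℕ) (x : F) :
    lc b m ≤ lc (Function.update b m x) (m+1) :=
  (lc_update_eq b m x).symm.le.trans (lc_mono _ (Nat.le_succ m))

lemma lc_ext_stay_or_jump (b : ℕ → F) (m : ℕ) (x : F) :
    lc (Function.update b m x) (m+1) = lc b m ∨
      m + 1 ≤ lc b m + lc (Function.update b m x) (m+1) := by
  have := lc_succ_eq_or (Function.update b m x) m
  rw [lc_update_eq] at this
  exact this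

lemma lc_ext_le (b : ℕ → F) (m : ℕ) (x : F) :
    lc (Function.update b m x) (m+1) ≤ max (lc b m) (m + 1 - lc b m) := by
  have := lc_succ_le (Function.update b m x) m
  rw [lc_update_eq] at this
  exact this

/-- The "stay" extension exists. -/
lemma lc_ext_stay (b : ℕ → F) (m : ℕ) :
    ∃ x : F, lc (Function.update b m x) (m+1) = lc b m := by
  obtain ⟨c, hc⟩ := lc_exists b m
  set l := lc b m with hl
  have hlm : l ≤ m := lc_le_len b m
  refine ⟨∑ i ∈ Finset.range l, c i * b (m - 1 - i), ?_⟩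
  refine le_antisymm (lc_le ⟨c, ?_⟩) (lc_ext_ge b m _)
  intro t h1 h2
  rcases (by omega : t < m ∨ t = m) with h | rfl
  · rw [Function.update_of_ne (by omega), hc t h1 h]
    exact Finset.sum_congr rfl fun i hi => by
      rw [Function.update_of_ne (by omega)]
  · rw [Function.update_self]
    refine Finset.sum_congr rfl fun i hi => ?_
    simp only [Finset.mem_range] at hi
    rw [Function.update_of_ne (by omega)]

/-- The "stay" extension is unique when the length is at least twice the complexity bound. -/
lemma lc_ext_stay_unique {b : ℕ → F} {m r : ℕ} (hm : 2 * r ≤ m) {x x' : F}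
    (hx : lc (Function.update b m x) (m+1) ≤ r)
    (hx' : lc (Function.update b m x') (m+1) ≤ r) :
    x = x' := by
  obtain ⟨c, hc⟩ := lc_exists (Function.update b m x) (m+1)
  obtain ⟨c', hc'⟩ := lc_exists (Function.update b m x') (m+1)
  have hag : ∀ t < m, Function.update b m x t = Function.update b m x' t := by
    intro t ht
    rw [Function.update_of_ne (by omega), Function.update_of_ne (by omega)]
  have := gens_unique hc hc' hag (by omega) (by omega) m (by omega)
  rwa [Function.update_self, Function.update_self] at this

/-! ### Fin-level interface -/

variable {m : ℕ}

def ofFin {m : ℕ} (b : Fin m → F) : ℕ → F := fun t => if h : t < m then b ⟨t, h⟩ else 0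

noncomputable def lcF {m : ℕ} (b : Fin m → F) : ℕ := lc (ofFin b) m

lemma lcF_le_len {m : ℕ} (b : Fin m → F) : lcF b ≤ m := lc_le_len _ m

lemma ofFin_snoc {m : ℕ} (b : Fin m → F) (x : F) :
    ofFin (Fin.snoc b x) = Function.update (ofFin b) m x := by
  funext t
  rcases lt_trichotomy t m with h | rfl | h
  · rw [Function.update_of_ne (by omega)]
    simp only [ofFin, dif_pos h, dif_pos (by omega : t < m + 1)]
    rw [show (⟨t, by omega⟩ : Fin (m+1)) = Fin.castSucc ⟨t, h⟩ from rfl, Fin.snoc_castSucc]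
  · rw [Function.update_self]
    simp only [ofFin, dif_pos (by omega : t < t + 1)]
    rw [show (⟨t, by omega⟩ : Fin (t+1)) = Fin.last t from rfl, Fin.snoc_last]
  · rw [Function.update_of_ne (by omega)]
    simp only [ofFin, dif_neg (by omega : ¬ t < m + 1), dif_neg (by omega : ¬ t < m)]

lemma lcF_snoc (b : Fin m → F) (x : F) :
    lcF (Fin.snoc b x) = lc (Function.update (ofFin b) m x) (m+1) := by
  rw [lcF, ofFin_snoc]

lemma lcF_snoc_ge (b : Fin m → F) (x : F) : lcF b ≤ lcF (Fin.snoc b x) := by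
  rw [lcF_snoc]; exact lc_ext_ge _ m x

lemma lcF_snoc_stay_or_jump (b : Fin m → F) (x : F) :
    lcF (Fin.snoc b x) = lcF b ∨ m + 1 ≤ lcF b + lcF (Fin.snoc b x) := by
  rw [lcF_snoc]; exact lc_ext_stay_or_jump _ m x

lemma lcF_snoc_le (b : Fin m → F) (x : F) :
    lcF (Fin.snoc b x) ≤ max (lcF b) (m + 1 - lcF b) := by
  rw [lcF_snoc]; exact lc_ext_le _ m x

lemma lcF_snoc_stay (b : Fin m → F) : ∃ x : F, lcF (Fin.snoc b x) = lcF b := by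
  obtain ⟨x, hx⟩ := lc_ext_stay (ofFin b) m
  exact ⟨x, by rw [lcF_snoc]; exact hx⟩

lemma lcF_snoc_stay_unique {b : Fin m → F} {r : ℕ} (hm : 2 * r ≤ m) {x x' : F}
    (hx : lcF (Fin.snoc b x) ≤ r) (hx' : lcF (Fin.snoc b x') ≤ r) : x = x' := by
  rw [lcF_snoc] at hx hx'
  exact lc_ext_stay_unique hm hx hx'

lemma lcF_elim0 (b : Fin 0 → F) : lcF b = 0 := lc_zero _

/-! ### Counting -/

section Counting

open Classical Finset

variable (F) [Fintype F]

noncomputable def Ncard (m c : ℕ) : ℕ :=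
  (Finset.univ.filter (fun b : Fin m → F => lcF b = c)).card

variable {F}

lemma Ncard_zero (c : ℕ) : Ncard F 0 c = if c = 0 then 1 else 0 := by
  rcases eq_or_ne c 0 with rfl | hc
  · rw [if_pos rfl, Ncard]
    have : (Finset.univ.filter (fun b : Fin 0 → F => lcF b = 0)) = Finset.univ := by
      apply Finset.filter_true_of_mem
      intro b _
      exact lcF_elim0 b
    rw [this]
    simp
  · rw [if_neg hc, Ncard]
    have : (Finset.univ.filter (fun b : Fin 0 → F => lcF b = c)) = ∅ := by
      apply Finset.filter_false_of_mem
      intro b _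
      rw [lcF_elim0 b]
      exact fun h => hc h.symm
    rw [this, Finset.card_empty]

lemma Ncard_of_gt {m c : ℕ} (h : m < c) : Ncard F m c = 0 := by
  rw [Ncard]
  have : (Finset.univ.filter (fun b : Fin m → F => lcF b = c)) = ∅ := by
    apply Finset.filter_false_of_mem
    intro b _ hb
    have := lcF_le_len b
    omega
  simp [this]

lemma card_snoc {m : ℕ} (P : (Fin (m+1) → F) → Prop) [DecidablePred P]
    [∀ b : Fin m → F, DecidablePred (fun x : F => P (Fin.snoc b x))] :
    (Finset.univ.filter (fun a : Fin (m+1) → F => P a)).card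
      = ∑ b : Fin m → F, (Finset.univ.filter (fun x : F => P (Fin.snoc b x))).card := by
  have hbij : Function.Bijective (fun p : (Fin m → F) × F => (Fin.snoc p.1 p.2 : Fin (m+1) → F)) := by
    constructor
    · intro p p' h
      have h1 := congrArg Fin.init h
      rw [Fin.init_snoc, Fin.init_snoc] at h1
      have h2 := congrFun h (Fin.last m)
      simp only [Fin.snoc_last] at h2
      exact Prod.ext h1 h2
    · intro a
      exact ⟨(Fin.init a, a (Fin.last m)), Fin.snoc_init_self a⟩
  rw [Finset.card_filter]
  rw [← Fintype.sum_bijective _ hbij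
    (fun p : (Fin m → F) × F => if P (Fin.snoc p.1 p.2) then 1 else 0)
    (fun a => if P a then 1 else 0) (fun p => by
      congr 1)]
  rw [Fintype.sum_prod_type]
  exact Finset.sum_congr rfl fun b _ => by rw [Finset.card_filter]

lemma fiber_high {m : ℕ} {b : Fin m → F} (h2 : m < 2 * lcF b) (x : F) :
    lcF (Fin.snoc b x) = lcF b := by
  have h1 := lcF_snoc_ge b x
  have h3 := lcF_snoc_le b x
  have : max (lcF b) (m + 1 - lcF b) = lcF b := by
    apply max_eq_left
    omega
  omega

lemma fiber_low {m : ℕ} {b : Fin m → F} (h2 : 2 * lcF b ≤ m) :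
    ∃ x0 : F, ∀ x : F,
      lcF (Fin.snoc b x) = (if x = x0 then lcF b else m + 1 - lcF b) := by
  obtain ⟨x0, hx0⟩ := lcF_snoc_stay b
  refine ⟨x0, fun x => ?_⟩
  rcases eq_or_ne x x0 with rfl | hne
  · rw [if_pos rfl, hx0]
  · rw [if_neg hne]
    have hj : m + 1 ≤ lcF b + lcF (Fin.snoc b x) := by
      rcases lcF_snoc_stay_or_jump b x with h | h
      · exfalso
        exact hne (lcF_snoc_stay_unique (r := lcF b) h2 (le_of_eq h) (le_of_eq hx0))
      · exact h
    have h3 := lcF_snoc_le b x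
    have : max (lcF b) (m + 1 - lcF b) = m + 1 - lcF b := by
      apply max_eq_right
      omega
    omega

lemma Ncard_succ (m c : ℕ) :
    Ncard F (m+1) c = (if m < 2*c then Fintype.card F else 1) * Ncard F m c
      + (if m + 2 ≤ 2*c ∧ c ≤ m + 1 then (Fintype.card F - 1) * Ncard F m (m + 1 - c)
          else 0) := by
  set q := Fintype.card F with hq
  have hq1 : 1 ≤ q := Fintype.card_pos
  rw [Ncard, card_snoc (fun a : Fin (m+1) → F => lcF a = c)]
  have key : ∀ b : Fin m → F,
      (Finset.univ.filter (fun x : F => lcF (Fin.snoc b x) = c)).card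
      = (if m < 2*c then q else 1) * (if lcF b = c then 1 else 0)
        + (if m + 2 ≤ 2*c ∧ c ≤ m + 1 then (q - 1) * (if lcF b = m + 1 - c then 1 else 0)
            else 0) := by
    intro b
    have hbm : lcF b ≤ m := lcF_le_len b
    rcases Nat.lt_or_ge m (2 * lcF b) with hh | hh
    · have hall : ∀ x : F, lcF (Fin.snoc b x) = lcF b := fiber_high hh
      rcases eq_or_ne (lcF b) c with he | he
      · have hfil : (Finset.univ.filter (fun x : F => lcF (Fin.snoc b x) = c))
            = Finset.univ := Finset.filter_true_of_mem (fun x _ => by rw [hall x, he])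
        rw [hfil, Finset.card_univ, ← hq]
        split_ifs <;> omega
      · have hfil : (Finset.univ.filter (fun x : F => lcF (Fin.snoc b x) = c)) = ∅ :=
          Finset.filter_false_of_mem (fun x _ hx => he (by rw [← hall x, hx]))
        rw [hfil, Finset.card_empty]
        split_ifs <;> omega
    · obtain ⟨x0, hx0⟩ := fiber_low hh
      rcases eq_or_ne c (lcF b) with rfl | hne
      · have hfil : (Finset.univ.filter (fun x : F => lcF (Fin.snoc b x) = lcF b))
            = {x0} := by
          ext x
          simp only [Finset.mem_filter, Finset.mem_univ, true_and, Finset.mem_singleton]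
          rw [hx0 x]
          constructor
          · intro h
            by_contra hxx
            rw [if_neg hxx] at h
            omega
          · intro h
            rw [if_pos h]
        rw [hfil, Finset.card_singleton]
        split_ifs <;> omega
      · rcases eq_or_ne c (m + 1 - lcF b) with he | he
        · have hfil : (Finset.univ.filter (fun x : F => lcF (Fin.snoc b x) = c))
              = Finset.univ \ {x0} := by
            ext x
            simp only [Finset.mem_filter, Finset.mem_univ, true_and, Finset.mem_sdiff,
              Finset.mem_singleton]
            rw [hx0 x]
            constructor
            · intro h hxx
              rw [if_pos hxx] at h
              exact hne h.symm
            · intro h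
              rw [if_neg h, he]
          rw [hfil, Finset.card_sdiff_of_subset (by simp), Finset.card_singleton, Finset.card_univ,
            ← hq]
          split_ifs <;> omega
        · have hfil : (Finset.univ.filter (fun x : F => lcF (Fin.snoc b x) = c)) = ∅ := by
            apply Finset.filter_false_of_mem
            intro x _ hx
            rw [hx0 x] at hx
            by_cases hxx : x = x0
            · rw [if_pos hxx] at hx
              exact hne hx.symm
            · rw [if_neg hxx] at hx
              exact he hx.symm
          rw [hfil, Finset.card_empty]
          split_ifs <;> omega
  rw [Finset.sum_congr rfl (fun b _ => key b), Finset.sum_add_distrib, ← Finset.mul_sum]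
  congr 1
  · congr 1
    rw [← Finset.card_filter]
    rfl
  · by_cases hc2 : m + 2 ≤ 2*c ∧ c ≤ m + 1
    · simp only [if_pos hc2]
      rw [← Finset.mul_sum, ← Finset.card_filter]
      rfl
    · simp only [if_neg hc2]
      simp

theorem Ncard_closed (m c : ℕ) : Ncard F m c
    = if c = 0 then 1
      else if c ≤ m then
        (Fintype.card F - 1) * Fintype.card F ^ (min (2*c-1) (2*(m-c)))
      else 0 := by
  induction m generalizing c with
  | zero =>
    rw [Ncard_zero]
    rcases eq_or_ne c 0 with rfl | hc
    · simp
    · rw [if_neg hc, if_neg hc, if_neg (by omega)]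
  | succ m IH =>
    rw [Ncard_succ, IH c, IH (m + 1 - c)]
    have hq2 : 2 ≤ Fintype.card F := Fintype.one_lt_card
    obtain ⟨p, hp⟩ : ∃ p, Fintype.card F = p + 1 := ⟨Fintype.card F - 1, by omega⟩
    rw [hp]
    simp only [Nat.add_sub_cancel]
    rcases eq_or_ne c 0 with rfl | hc0
    · norm_num
    · rcases (by omega :
        (1 ≤ c ∧ 2*c ≤ m) ∨ (2*c = m+1) ∨ (m+2 ≤ 2*c ∧ c ≤ m) ∨ (c = m+1) ∨ (m+1 < c))
        with h | h | h | h | h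
      · rw [show min (2*c-1) (2*(m-c)) = 2*c-1 by omega,
          show min (2*c-1) (2*(m+1-c)) = 2*c-1 by omega]
        split_ifs <;> first | omega | ring
      · rw [show min (2*c-1) (2*(m-c)) = 2*c-2 by omega,
          show min (2*c-1) (2*(m+1-c)) = 2*c-1 by omega,
          show 2*c-1 = (2*c-2)+1 by omega, pow_succ]
        split_ifs <;> first | omega | ring
      · rw [show min (2*c-1) (2*(m-c)) = 2*(m-c) by omega,
          show min (2*(m+1-c)-1) (2*(m-(m+1-c))) = 2*(m-c)+1 by omega,
          show min (2*c-1) (2*(m+1-c)) = 2*(m-c)+1+1 by omega,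
          pow_succ, pow_succ, pow_succ]
        split_ifs <;> first | omega | ring
      · subst h
        rw [show m+1-(m+1) = 0 by omega,
          show min (2*(m+1)-1) (2*0) = 0 by omega]
        split_ifs <;> first | contradiction | omega | simp
      · split_ifs <;> first | omega | ring

/-- Helper: counting a filter on values of `lcF` by strata. -/
lemma card_filter_lcF_mem {m : ℕ} (S : Finset ℕ) :
    (Finset.univ.filter (fun b : Fin m → F => lcF b ∈ S)).card
      = ∑ c ∈ S, Ncard F m c := by
  have hset : (Finset.univ.filter (fun b : Fin m → F => lcF b ∈ S))
      = S.biUnion (fun c => Finset.univ.filter (fun b : Fin m → F => lcF b = c)) := by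
    ext b
    simp only [Finset.mem_filter, Finset.mem_univ, true_and, Finset.mem_biUnion]
    constructor
    · intro h
      exact ⟨lcF b, h, rfl⟩
    · rintro ⟨c, hc, rfl⟩
      exact hc
  have hdisj : ∀ x ∈ S, ∀ y ∈ S, x ≠ y →
      Disjoint (Finset.univ.filter (fun b : Fin m → F => lcF b = x))
        (Finset.univ.filter (fun b : Fin m → F => lcF b = y)) := by
    intro x _ y _ hxy
    apply Finset.disjoint_left.mpr
    intro b hb hb'
    simp only [Finset.mem_filter] at hb hb'
    exact hxy (hb.2 ▸ hb'.2 ▸ rfl)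
  rw [hset, Finset.card_biUnion hdisj]
  rfl

lemma geom_aux (q : ℕ) (hq : 1 ≤ q) (r : ℕ) :
    1 + ((∑ c ∈ Finset.range r, (q-1) * q^(2*c+1))
      + (∑ k ∈ Finset.range r, (q-1) * q^(2*k))) = q^(2*r) := by
  induction r with
  | zero => simp
  | succ r IH =>
    rw [Finset.sum_range_succ, Finset.sum_range_succ]
    obtain ⟨p, rfl⟩ : ∃ p, q = p + 1 := ⟨q - 1, by omega⟩
    simp only [Nat.add_sub_cancel] at IH ⊢
    rw [show 2 * (r + 1) = 2*r+2 by omega]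
    have e1 : (p+1)^(2*r+2) = (p+1)^(2*r) + (p * (p+1)^(2*r+1) + p * (p+1)^(2*r)) := by
      rw [show 2*r+2 = (2*r)+1+1 by omega, show 2*r+1 = (2*r)+1 by omega,
        pow_succ, pow_succ]
      ring
    rw [e1, ← IH]
    ring

/-- The main counting theorem. -/
theorem count_lc (n r : ℕ) (hr : r < n) (hn : 1 ≤ n) :
    (Finset.univ.filter
        (fun b : Fin (2*n-1) → F => lcF b ≤ r ∨ 2*n - r ≤ lcF b)).card
      = Fintype.card F ^ (2*r) := by
  set m := 2*n-1 with hm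
  have hq2 : 2 ≤ Fintype.card F := Fintype.one_lt_card
  set S : Finset ℕ := Finset.range (r+1) ∪ (Finset.range r).image (fun k => m - k) with hS
  have hmem : ∀ b : Fin m → F, (lcF b ≤ r ∨ 2*n - r ≤ lcF b) ↔ lcF b ∈ S := by
    intro b
    have hb := lcF_le_len b
    rw [hS]
    simp only [Finset.mem_union, Finset.mem_range, Finset.mem_image]
    constructor
    · rintro (h | h)
      · left; omega
      · right; exact ⟨m - lcF b, by omega, by omega⟩
    · rintro (h | ⟨k, hk, hkeq⟩)
      · left; omega
      · right; omega
  rw [Finset.filter_congr (fun b _ => by rw [hmem b]), card_filter_lcF_mem]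
  have hdisj : Disjoint (Finset.range (r+1)) ((Finset.range r).image (fun k => m - k)) := by
    apply Finset.disjoint_left.mpr
    intro x hx hx'
    simp only [Finset.mem_range] at hx
    simp only [Finset.mem_image, Finset.mem_range] at hx'
    obtain ⟨k, hk, hkeq⟩ := hx'
    omega
  rw [hS, Finset.sum_union hdisj]
  have hinj : Set.InjOn (fun k => m - k) (Finset.range r) := by
    intro x hx y hy hxy
    simp only [Finset.coe_range, Set.mem_Iio] at hx hy
    simp only at hxy
    omega
  rw [Finset.sum_image hinj]
  have e1 : ∑ c ∈ Finset.range (r+1), Ncard F m c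
      = 1 + ∑ c ∈ Finset.range r, (Fintype.card F - 1) * Fintype.card F ^ (2*c+1) := by
    rw [Finset.sum_range_succ']
    have h0 : Ncard F m 0 = 1 := by rw [Ncard_closed]; simp
    rw [h0]
    rw [add_comm]
    congr 1
    refine Finset.sum_congr rfl fun c hc => ?_
    simp only [Finset.mem_range] at hc
    rw [Ncard_closed, if_neg (by omega), if_pos (by omega),
      show min (2*(c+1)-1) (2*(m-(c+1))) = 2*c+1 by omega]
  have e2 : ∑ k ∈ Finset.range r, Ncard F m (m - k)
      = ∑ k ∈ Finset.range r, (Fintype.card F - 1) * Fintype.card F ^ (2*k) := by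
    refine Finset.sum_congr rfl fun k hk => ?_
    simp only [Finset.mem_range] at hk
    rw [Ncard_closed, if_neg (by omega), if_pos (by omega),
      show min (2*(m-k)-1) (2*(m-(m-k))) = 2*k by omega]
  rw [e1, e2, add_assoc, geom_aux _ (by omega)]

end Counting

/-! ### Rank of the Hankel matrix -/

section Rank

def hankelOf (n : ℕ) (a : ℕ → F) : Matrix (Fin n) (Fin n) F :=
  Matrix.of fun i j => a ((i : ℕ) + (j : ℕ))

lemma mem_ker_iff {n : ℕ} (a : ℕ → F) (v : Fin n → F) :
    v ∈ LinearMap.ker (hankelOf n a).mulVecLin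
      ↔ ∀ i : Fin n, ∑ j : Fin n, a ((i : ℕ) + (j : ℕ)) * v j = 0 := by
  rw [LinearMap.mem_ker, Matrix.mulVecLin_apply]
  constructor
  · intro h i
    have := congrFun h i
    simpa [Matrix.mulVec, dotProduct, hankelOf] using this
  · intro h
    funext i
    simpa [Matrix.mulVec, dotProduct, hankelOf] using h i

def relVal (d sh : ℕ) (c : ℕ → F) (t : ℕ) : F :=
  (if t = d + sh then 1 else 0) - (if sh ≤ t ∧ t < d + sh then c (d + sh - 1 - t) else 0)

lemma relVal_top {d sh t : ℕ} (c : ℕ → F) (h : d + sh < t) : relVal d sh c t = 0 := by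
  rw [relVal, if_neg (by omega), if_neg (by omega), sub_zero]

lemma relVal_diag (d sh : ℕ) (c : ℕ → F) : relVal d sh c (d + sh) = 1 := by
  rw [relVal, if_pos rfl, if_neg (by omega), sub_zero]

/-- A shifted recurrence gives a kernel vector of the Hankel matrix. -/
lemma relVec_mem_ker {n d sh V : ℕ} {a c : ℕ → F} (hg : Gens c d V a)
    (h1 : d + sh < n) (h2 : n - 1 + d + sh < V) (hn : 1 ≤ n) :
    (fun j : Fin n => relVal d sh c (j : ℕ)) ∈ LinearMap.ker (hankelOf n a).mulVecLin := by
  rw [mem_ker_iff]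
  intro i
  have hsum : ∑ j : Fin n, a ((i : ℕ) + (j : ℕ)) * relVal d sh c (j : ℕ)
      = ∑ t ∈ Finset.range n, a ((i : ℕ) + t) * relVal d sh c t :=
    Fin.sum_univ_eq_sum_range (fun t => a ((i : ℕ) + t) * relVal d sh c t) n
  rw [hsum]
  have hexp : ∀ t, a ((i : ℕ) + t) * relVal d sh c t
      = (if t = d + sh then a ((i : ℕ) + t) else 0)
        - (if sh ≤ t ∧ t < d + sh then c (d + sh - 1 - t) * a ((i : ℕ) + t) else 0) := by
    intro t
    rw [relVal]
    split_ifs <;> ring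
  rw [Finset.sum_congr rfl (fun t _ => hexp t), Finset.sum_sub_distrib]
  have eA : ∑ t ∈ Finset.range n, (if t = d + sh then a ((i : ℕ) + t) else 0)
      = a ((i : ℕ) + (d + sh)) := by
    rw [Finset.sum_ite_eq' (Finset.range n) (d + sh) (fun t => a ((i : ℕ) + t)),
      if_pos (Finset.mem_range.mpr h1)]
  have eB : ∑ t ∈ Finset.range n,
        (if sh ≤ t ∧ t < d + sh then c (d + sh - 1 - t) * a ((i : ℕ) + t) else 0)
      = ∑ k ∈ Finset.range d, c k * a ((i : ℕ) + (d + sh) - 1 - k) := by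
    rw [← Finset.sum_subset
      (show Finset.Ico sh (d + sh) ⊆ Finset.range n by
        intro x hx
        simp only [Finset.mem_Ico] at hx
        simp only [Finset.mem_range]
        omega)
      (fun x _ hx => by
        simp only [Finset.mem_Ico, not_and, not_lt] at hx
        rcases Nat.lt_or_ge x sh with h | h
        · rw [if_neg (by omega)]
        · rw [if_neg (by have := hx h; omega)])]
    rw [Finset.sum_congr rfl (fun x hx => by
      simp only [Finset.mem_Ico] at hx
      rw [if_pos ⟨hx.1, hx.2⟩])]
    rw [Finset.sum_Ico_eq_sum_range, show d + sh - sh = d by omega]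
    rw [← Finset.sum_range_reflect]
    refine Finset.sum_congr rfl fun k hk => ?_
    simp only [Finset.mem_range] at hk
    rw [show d + sh - 1 - (sh + (d - 1 - k)) = k by omega,
      show (i : ℕ) + (sh + (d - 1 - k)) = (i : ℕ) + (d + sh) - 1 - k by omega]
  rw [eA, eB, ← hg ((i : ℕ) + (d + sh)) (by omega) (by omega), sub_self]

/-- Echelon families are linearly independent. -/
lemma li_pivots {N n : ℕ} (w : Fin N → Fin n → F) (p : Fin N → ℕ)
    (hp : ∀ k, p k < n) (hmono : StrictMono p)
    (hdiag : ∀ k, w k ⟨p k, hp k⟩ = 1)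
    (hzero : ∀ k (j : Fin n), p k < (j : ℕ) → w k j = 0) :
    LinearIndependent F w := by
  rw [Fintype.linearIndependent_iff]
  intro g hg
  by_contra hcon
  push_neg at hcon
  obtain ⟨k0, hk0⟩ := hcon
  classical
  set S := Finset.univ.filter (fun k => g k ≠ 0) with hS
  have hSne : S.Nonempty := ⟨k0, by simp [hS, hk0]⟩
  set kM := S.max' hSne with hkM
  have hkMS : kM ∈ S := S.max'_mem hSne
  have hgkM : g kM ≠ 0 := by
    have := hkMS
    simp only [hS, Finset.mem_filter] at this
    exact this.2
  have heval := congrFun hg ⟨p kM, hp kM⟩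
  rw [Finset.sum_apply] at heval
  have hsingle : ∑ k : Fin N, (g k • w k) ⟨p kM, hp kM⟩ = g kM := by
    rw [Finset.sum_eq_single kM]
    · rw [Pi.smul_apply, hdiag kM, smul_eq_mul, mul_one]
    · intro b _ hb
      rcases lt_or_gt_of_ne hb with h | h
      · rw [Pi.smul_apply, hzero b ⟨p kM, hp kM⟩ (hmono h), smul_eq_mul, mul_zero]
      · have hbS : b ∉ S := fun hin => absurd (S.le_max' b hin) (by omega)
        have : g b = 0 := by
          by_contra hgb
          exact hbS (by simp [hS, hgb])
        rw [this, zero_smul]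
        rfl
    · intro h
      exact absurd (Finset.mem_univ kM) h
  rw [hsingle] at heval
  simp only [Pi.zero_apply] at heval
  exact hgkM heval

lemma finrank_ker_ge {n N : ℕ} (K : Submodule F (Fin n → F)) (w : Fin N → Fin n → F)
    (hw : ∀ k, w k ∈ K) (hli : LinearIndependent F w) :
    N ≤ Module.finrank F K := by
  have hspan : Submodule.span F (Set.range w) ≤ K := by
    rw [Submodule.span_le]
    rintro x ⟨k, rfl⟩
    exact hw k
  calc N = Fintype.card (Fin N) := (Fintype.card_fin N).symm
  _ = Module.finrank F (Submodule.span F (Set.range w)) := (finrank_span_eq_card hli).symm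
  _ ≤ Module.finrank F K := Submodule.finrank_mono hspan

lemma finrank_le_window {n off sz : ℕ} (K : Submodule F (Fin n → F)) (hsz : off + sz ≤ n)
    (hwin : ∀ v ∈ K, (∀ i : Fin n, off ≤ (i : ℕ) → (i : ℕ) < off + sz → v i = 0) → v = 0) :
    Module.finrank F K ≤ sz := by
  set f : K →ₗ[F] (Fin sz → F) :=
    { toFun := fun v => fun i => (v : Fin n → F) ⟨off + (i : ℕ), by omega⟩
      map_add' := fun v v' => by funext i; simp
      map_smul' := fun r v => by funext i; simp } with hf
  have hinj : Function.Injective f := by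
    rw [← LinearMap.ker_eq_bot, LinearMap.ker_eq_bot']
    intro v hv
    have hz : ∀ i : Fin n, off ≤ (i : ℕ) → (i : ℕ) < off + sz → (v : Fin n → F) i = 0 := by
      intro i hi1 hi2
      have := congrFun hv ⟨(i : ℕ) - off, by omega⟩
      simp only [hf, LinearMap.coe_mk, AddHom.coe_mk, Pi.zero_apply] at this
      convert this using 2
      ext
      simp
      omega
    have := hwin (v : Fin n → F) v.2 hz
    exact Subtype.ext this
  calc Module.finrank F K ≤ Module.finrank F (Fin sz → F) :=
        LinearMap.finrank_le_finrank_of_injective hinj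
  _ = sz := by simp

/-- A kernel vector with top coordinate `s` bounds the complexity of the prefix of
length `n + s`. -/
lemma lc_le_of_ker {n : ℕ} {a : ℕ → F} {v : Fin n → F}
    (hv : v ∈ LinearMap.ker (hankelOf n a).mulVecLin) {s : Fin n}
    (hs : v s ≠ 0) (htop : ∀ j : Fin n, (s : ℕ) < (j : ℕ) → v j = 0) :
    lc a (n + (s : ℕ)) ≤ (s : ℕ) := by
  rw [mem_ker_iff] at hv
  set v' : ℕ → F := fun t => if h : t < n then v ⟨t, h⟩ else 0 with hv'
  set c : ℕ → F := fun k => -(v' ((s : ℕ) - 1 - k) / v s) with hc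
  apply lc_le ⟨c, ?_⟩
  intro t h1 h2
  set i : ℕ := t - (s : ℕ) with hi
  have hin : i < n := by omega
  have hrow := hv ⟨i, hin⟩
  have hrow' : ∑ u ∈ Finset.range n, a (i + u) * v' u = 0 := by
    rw [← hrow]
    rw [← Fin.sum_univ_eq_sum_range (fun u => a (i + u) * v' u) n]
    refine Finset.sum_congr rfl fun j _ => ?_
    simp only [hv', dif_pos j.isLt]
  have hsplit : ∑ u ∈ Finset.range n, a (i + u) * v' u
      = a (i + (s : ℕ)) * v s + ∑ u ∈ Finset.range (s : ℕ), a (i + u) * v' u := by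
    have hvan : ∀ x ∈ Finset.range n, x ∉ Finset.range ((s : ℕ) + 1)
        → a (i + x) * v' x = 0 := by
      intro x hx hx'
      simp only [Finset.mem_range, not_lt] at hx hx'
      simp only [hv', dif_pos hx]
      rw [htop ⟨x, hx⟩ (show (s : ℕ) < x by omega), mul_zero]
    rw [← Finset.sum_subset (Finset.range_subset_range.mpr (by omega : (s : ℕ) + 1 ≤ n)) hvan,
      Finset.sum_range_succ]
    have hvs : v' (s : ℕ) = v s := by simp only [hv', dif_pos s.isLt]
    rw [hvs]
    ring
  rw [hsplit] at hrow'
  have hrefl : ∑ k ∈ Finset.range (s : ℕ), v' ((s : ℕ) - 1 - k) * a (t - 1 - k)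
      = ∑ u ∈ Finset.range (s : ℕ), v' u * a (i + u) := by
    rw [← Finset.sum_range_reflect (fun u => v' u * a (i + u)) (s : ℕ)]
    refine Finset.sum_congr rfl fun k hk => ?_
    simp only [Finset.mem_range] at hk
    rw [show i + ((s : ℕ) - 1 - k) = t - 1 - k by omega]
  have e1 : ∑ k ∈ Finset.range (s : ℕ), c k * a (t - 1 - k)
      = -((∑ u ∈ Finset.range (s : ℕ), a (i + u) * v' u) / v s) := by
    calc ∑ k ∈ Finset.range (s : ℕ), c k * a (t - 1 - k)
        = ∑ k ∈ Finset.range (s : ℕ), -(v' ((s : ℕ) - 1 - k) * a (t - 1 - k)) / v s :=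
          Finset.sum_congr rfl fun k _ => by rw [hc]; ring
      _ = (∑ k ∈ Finset.range (s : ℕ), -(v' ((s : ℕ) - 1 - k) * a (t - 1 - k))) / v s :=
          (Finset.sum_div _ _ _).symm
      _ = -(∑ k ∈ Finset.range (s : ℕ), v' ((s : ℕ) - 1 - k) * a (t - 1 - k)) / v s := by
          rw [Finset.sum_neg_distrib]
      _ = -((∑ u ∈ Finset.range (s : ℕ), a (i + u) * v' u) / v s) := by
          rw [hrefl, neg_div]
          congr 2
          exact Finset.sum_congr rfl fun u _ => mul_comm _ _
  rw [e1]
  have hS : ∑ u ∈ Finset.range (s : ℕ), a (i + u) * v' u = -(a (i + (s : ℕ)) * v s) :=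
    eq_neg_of_add_eq_zero_right hrow'
  rw [hS, show i + (s : ℕ) = t by omega, neg_div, neg_neg, mul_div_cancel_right₀ _ hs]

lemma exists_top {n : ℕ} {v : Fin n → F} (hv : v ≠ 0) :
    ∃ s : Fin n, v s ≠ 0 ∧ ∀ j : Fin n, (s : ℕ) < (j : ℕ) → v j = 0 := by
  classical
  set S := Finset.univ.filter (fun j => v j ≠ 0) with hS
  have hne : S.Nonempty := by
    by_contra h
    rw [Finset.not_nonempty_iff_eq_empty] at h
    apply hv
    funext j
    by_contra hj
    have : j ∈ S := Finset.mem_filter.mpr ⟨Finset.mem_univ j, hj⟩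
    rw [h] at this
    exact absurd this (Finset.notMem_empty j)
  refine ⟨S.max' hne, ?_, ?_⟩
  · have := S.max'_mem hne
    simp only [hS, Finset.mem_filter] at this
    exact this.2
  · intro j hj
    by_contra hvj
    have hjS : j ∈ S := by simp [hS, hvj]
    have := S.le_max' j hjS
    rw [Fin.le_def] at this
    omega

lemma exists_jump {a : ℕ → F} {s t0 m1 : ℕ} (h0 : lc a t0 ≤ s) (h1 : s < lc a m1)
    (h2 : t0 ≤ m1) :
    ∃ T, t0 ≤ T ∧ T < m1 ∧ lc a T ≤ s ∧ T + 1 ≤ lc a T + lc a (T+1) ∧ s < lc a (T+1) := by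
  classical
  set T := Nat.findGreatest (fun t => lc a t ≤ s) m1 with hT
  have hTs : lc a T ≤ s := Nat.findGreatest_spec (P := fun t => lc a t ≤ s) h2 h0
  have hTle : T ≤ m1 := Nat.findGreatest_le m1
  have hTlt : T < m1 := by
    rcases eq_or_lt_of_le hTle with h | h
    · exfalso
      rw [h] at hTs
      omega
    · exact h
  have hT1 : ¬ lc a (T+1) ≤ s := by
    refine Nat.findGreatest_is_greatest (P := fun t => lc a t ≤ s) (k := T+1) (n := m1)
      ?_ (by omega)
    rw [← hT]
    omega
  have hTge : t0 ≤ T := by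
    by_contra h
    push_neg at h
    exact Nat.findGreatest_is_greatest (P := fun t => lc a t ≤ s) (k := t0) (n := m1)
      (by rw [← hT]; omega) (by omega) h0
  have hjump : T + 1 ≤ lc a T + lc a (T+1) := by
    rcases lc_succ_eq_or a T with h | h
    · omega
    · exact h
  exact ⟨T, hTge, hTlt, hTs, hjump, by omega⟩

/-- Last jump of the complexity profile. -/
lemma last_jump {a : ℕ → F} {m1 : ℕ} (h : 0 < lc a m1) :
    ∃ T, T < m1 ∧ lc a (T+1) = lc a m1 ∧ lc a T + lc a m1 = T + 1 := by
  obtain ⟨T, _, hTm, hTle, hTj, hTgt⟩ := exists_jump (a := a) (s := lc a m1 - 1) (t0 := 0)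
    (m1 := m1) (by rw [lc_zero]; omega) (by omega) (by omega)
  have h1 : lc a (T+1) = lc a m1 := le_antisymm (lc_mono a (by omega)) (by omega)
  have h2 := lc_succ_le a (T)
  rw [h1] at hTj h2
  have h3 : lc a m1 ≤ max (lc a T) (T + 1 - lc a T) := h2
  have h4 : lc a m1 ≤ T + 1 - lc a T := by
    rcases max_cases (lc a T) (T + 1 - lc a T) with ⟨hm, _⟩ | ⟨hm, _⟩ <;> omega
  exact ⟨T, hTm, h1, by omega⟩

lemma rank_add_ker {n : ℕ} (M : Matrix (Fin n) (Fin n) F) :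
    M.rank + Module.finrank F (LinearMap.ker M.mulVecLin) = n := by
  have h := LinearMap.finrank_range_add_finrank_ker M.mulVecLin
  rw [Module.finrank_fintype_fun_eq_card, Fintype.card_fin] at h
  rw [Matrix.rank]
  exact h

/-- The main rank characterization. -/
theorem rank_le_iff {n r : ℕ} (a : ℕ → F) (hr : r < n) (hn : 1 ≤ n) :
    (hankelOf n a).rank ≤ r ↔ (lc a (2*n-1) ≤ r ∨ 2*n - r ≤ lc a (2*n-1)) := by
  set m := 2*n-1 with hm
  set L := lc a m with hL
  have hLm : L ≤ m := lc_le_len a m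
  set K := LinearMap.ker (hankelOf n a).mulVecLin with hK
  have hrk := rank_add_ker (hankelOf n a)
  rw [← hK] at hrk
  have hiff : (hankelOf n a).rank ≤ r ↔ n - r ≤ Module.finrank F K := by omega
  rw [hiff]
  constructor
  · intro hdk
    by_contra hcon
    push_neg at hcon
    obtain ⟨hc1, hc2⟩ := hcon
    rcases Nat.lt_or_ge n L with hcase | hcase
    · -- n < L < 2n - r
      obtain ⟨T, hTm1, hT1, hT2⟩ := last_jump (a := a) (m1 := m) (by omega)
      set ls := lc a T with hls
      have hwin : ∀ v, v ∈ K → (∀ i : Fin n, ls ≤ (i : ℕ) → (i : ℕ) < ls + (L - n)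
          → v i = 0) → v = 0 := by
        intro v hvK hvan
        by_contra hv0
        obtain ⟨s, hs, htop⟩ := exists_top hv0
        have hpiv : lc a (n + (s : ℕ)) ≤ (s : ℕ) := lc_le_of_ker hvK hs htop
        rcases Nat.lt_or_ge (s : ℕ) ls with hcs | hcs
        · -- s < ls
          obtain ⟨U, hU0, hUm, hUle, hUj, hUgt⟩ := exists_jump (a := a) (s := (s : ℕ))
            (t0 := n + (s : ℕ)) (m1 := m) hpiv (by omega) (by omega)
          have hUT : U < T := by
            by_contra hUT
            push_neg at hUT
            have := lc_mono a hUT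
            omega
          have := lc_mono a (show U + 1 ≤ T by omega)
          omega
        · rcases Nat.lt_or_ge (s : ℕ) (ls + (L - n)) with hcs2 | hcs2
          · exact hs (hvan s hcs hcs2)
          · -- s ≥ ls + L - n, so n + s ≥ T + 1
            have h5 : T + 1 ≤ n + (s : ℕ) := by omega
            have := lc_mono a h5
            rw [hT1] at this
            omega
      have hle : Module.finrank F K ≤ L - n :=
        finrank_le_window K (by omega) hwin
      omega
    · -- L ≤ n
      have hwin : ∀ v, v ∈ K → (∀ i : Fin n, L ≤ (i : ℕ) → (i : ℕ) < L + (n - L)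
          → v i = 0) → v = 0 := by
        intro v hvK hvan
        by_contra hv0
        obtain ⟨s, hs, htop⟩ := exists_top hv0
        have hpiv : lc a (n + (s : ℕ)) ≤ (s : ℕ) := lc_le_of_ker hvK hs htop
        rcases Nat.lt_or_ge (s : ℕ) L with hcs | hcs
        · obtain ⟨U, hU0, hUm, hUle, hUj, hUgt⟩ := exists_jump (a := a) (s := (s : ℕ))
            (t0 := n + (s : ℕ)) (m1 := m) hpiv (by omega) (by omega)
          have := lc_mono a (show U + 1 ≤ m by omega)
          omega
        · exact hs (hvan s hcs (by omega))
      have hle : Module.finrank F K ≤ n - L :=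
        finrank_le_window K (by omega) hwin
      omega
  · intro h
    rcases h with h | h
    · -- L ≤ r : shifts of the minimal full recurrence
      obtain ⟨c, hc⟩ := lc_exists a m
      rw [← hL] at hc
      refine le_trans (by omega : n - r ≤ n - L) (finrank_ker_ge K
        (fun k : Fin (n - L) => fun j : Fin n => relVal L (k : ℕ) c (j : ℕ)) ?_ ?_)
      · intro k
        exact relVec_mem_ker hc (by have := k.isLt; omega) (by have := k.isLt; omega) hn
      · refine li_pivots _ (fun k => L + (k : ℕ))
          (fun k => by show L + (k : ℕ) < n; have := k.isLt; omega)
          (fun k k' hkk => by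
            simp only []
            have hlt : (k : ℕ) < (k' : ℕ) := hkk
            omega)
          (fun k => relVal_diag L (k : ℕ) c)
          (fun k j hj => relVal_top c hj)
    · -- 2n - r ≤ L : shifts of the last-jump recurrence
      have hnL : n < L := by omega
      obtain ⟨T, hTm1, hT1, hT2⟩ := last_jump (a := a) (m1 := m) (by omega)
      set ls := lc a T with hls
      obtain ⟨c, hc⟩ := lc_exists a T
      rw [← hls] at hc
      refine le_trans (by omega : n - r ≤ L - n) (finrank_ker_ge K
        (fun k : Fin (L - n) => fun j : Fin n => relVal ls (k : ℕ) c (j : ℕ)) ?_ ?_)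
      · intro k
        exact relVec_mem_ker hc (by have := k.isLt; omega) (by have := k.isLt; omega) hn
      · refine li_pivots _ (fun k => ls + (k : ℕ))
          (fun k => by show ls + (k : ℕ) < n; have := k.isLt; omega)
          (fun k k' hkk => by
            simp only []
            have hlt : (k : ℕ) < (k' : ℕ) := hkk
            omega)
          (fun k => relVal_diag ls (k : ℕ) c)
          (fun k j hj => relVal_top c hj)

end Rank

/-! ### Glue -/

section Glue

/-- Subtype-count version of the counting theorem. -/
theorem count_lc' [Fintype F] (n r : ℕ) (hr : r < n) (hn : 1 ≤ n) :
    Nat.card {b : Fin (2*n-1) → F // lcF b ≤ r ∨ 2*n - r ≤ lcF b}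
      = Fintype.card F ^ (2*r) := by
  classical
  rw [Nat.card_eq_fintype_card, Fintype.card_subtype]
  exact count_lc n r hr hn

def toSeq {n : ℕ} (M : Matrix (Fin n) (Fin n) F) : Fin (2*n-1) → F :=
  fun k => M ⟨min (k : ℕ) (n-1), by have := k.isLt; omega⟩
            ⟨(k : ℕ) - min (k : ℕ) (n-1), by have := k.isLt; omega⟩

lemma hankelOf_ofFin_apply {n : ℕ} (b : Fin (2*n-1) → F) (i j : Fin n) :
    hankelOf n (ofFin b) i j
      = b ⟨(i : ℕ) + (j : ℕ), by have := i.isLt; have := j.isLt; omega⟩ := by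
  show ofFin b ((i : ℕ) + (j : ℕ)) = _
  rw [ofFin]
  rw [dif_pos (show (i : ℕ) + (j : ℕ) < 2*n-1 from by have := i.isLt; have := j.isLt; omega)]

end Glue

end HankelAux

/-- A matrix is Hankel if `m i j = m r s` whenever `i + j = r + s`. -/
def IsHankel {F : Type*} {n : ℕ} (M : Matrix (Fin n) (Fin n) F) : Prop :=
  ∀ i j r s : Fin n, (i : ℕ) + (j : ℕ) = (r : ℕ) + (s : ℕ) → M i j = M r s

namespace HankelAux

lemma reconstruct {F : Type*} [Field F] {n : ℕ} (M : Matrix (Fin n) (Fin n) F)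
    (hM : IsHankel M) : hankelOf n (ofFin (toSeq M)) = M := by
  ext i j
  rw [hankelOf_ofFin_apply]
  show M _ _ = M i j
  apply hM
  show min ((i : ℕ) + (j : ℕ)) (n-1) + ((i : ℕ) + (j : ℕ) - min ((i : ℕ) + (j : ℕ)) (n-1))
    = (i : ℕ) + (j : ℕ)
  omega

lemma roundtrip {F : Type*} [Field F] {n : ℕ} (b : Fin (2*n-1) → F) :
    toSeq (hankelOf n (ofFin b)) = b := by
  funext k
  rw [toSeq, hankelOf_ofFin_apply]
  congr 1
  ext
  show min (k : ℕ) (n-1) + ((k : ℕ) - min (k : ℕ) (n-1)) = (k : ℕ)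
  have := k.isLt
  omega

lemma isHankel_hankelOf {F : Type*} [Field F] {n : ℕ} (a : ℕ → F) :
    IsHankel (hankelOf n a) := by
  intro i j r s h
  show a ((i : ℕ) + (j : ℕ)) = a ((r : ℕ) + (s : ℕ))
  rw [h]

end HankelAux

/-- For `0 ≤ r < n`, the number of `n × n` Hankel matrices over `F_q` of rank at most `r`
equals `q^(2r)`. -/
theorem hankel_rank_le_card (F : Type*) [Field F] [Fintype F] (n r : ℕ) (hr : r < n) :
    Nat.card {M : Matrix (Fin n) (Fin n) F // IsHankel M ∧ M.rank ≤ r}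
      = Fintype.card F ^ (2 * r) := by
  classical
  have hn : 1 ≤ n := by omega
  have hcond : ∀ b : Fin (2*n-1) → F,
      ((HankelAux.hankelOf n (HankelAux.ofFin b)).rank ≤ r
        ↔ (HankelAux.lcF b ≤ r ∨ 2*n - r ≤ HankelAux.lcF b)) := fun b =>
    HankelAux.rank_le_iff (HankelAux.ofFin b) hr hn
  have E : {M : Matrix (Fin n) (Fin n) F // IsHankel M ∧ M.rank ≤ r}
      ≃ {b : Fin (2*n-1) → F // HankelAux.lcF b ≤ r ∨ 2*n - r ≤ HankelAux.lcF b} :=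
    { toFun := fun M => ⟨HankelAux.toSeq M.1, by
        rw [← hcond (HankelAux.toSeq M.1)]
        rw [HankelAux.reconstruct M.1 M.2.1]
        exact M.2.2⟩
      invFun := fun b => ⟨HankelAux.hankelOf n (HankelAux.ofFin b.1),
        ⟨HankelAux.isHankel_hankelOf _, (hcond b.1).mpr b.2⟩⟩
      left_inv := fun M => Subtype.ext (HankelAux.reconstruct M.1 M.2.1)
      right_inv := fun b => Subtype.ext (HankelAux.roundtrip b.1) }
  rw [Nat.card_congr E]
  exact HankelAux.count_lc' n r hr hn
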